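/- Let R be a commutative integral domain, I a linearly ordered cancellative additive commutative monoid, and A an associative unital R-algebra with a compatibly ordered basis (b_i)_{i ∈ I}. For a nonzero x ∈ A let j(x) ∈ I denote the largest index in the (finite, nonempty) support of the coordinates of x with respect to the basis, and let c(x) ∈ R denote the coordinate of x at j(x) (the leading coefficient). Then for all nonzero x, y ∈ A: (1) every coordinate of x·y at an index strictly greater than j(x) + j(y) vanishes, and (2) there is a unit u of R such that the coordinate of x·y at the index j(x) + j(y) equals u · c(x) · c(y); in particular this coordinate is nonzero and x·y ≠ 0. -/

import Mathlib

/-- Leading-term computation for an algebra with a compatibly ordered basis over a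
commutative domain: for nonzero `x, y` with leading indices `jx, jy` (the greatest
elements of the supports of their coordinate functions), every coordinate of `x * y`
at an index strictly greater than `jx + jy` vanishes, and the coordinate of `x * y`
at `jx + jy` is a unit times the product of the leading coefficients of `x` and `y`;
in particular it is nonzero and `x * y ≠ 0`. -/
theorem stated_skein_leading_term
    {R : Type*} [CommRing R] [IsDomain R]
    {I : Type*} [AddCommMonoid I] [LinearOrder I] [IsOrderedCancelAddMonoid I]
    {A : Type*} [Ring A] [Algebra R A]
    (b : Module.Basis I R A)
    (hb : ∀ i j : I, ∃ u : Rˣ, b i * b j = u • b (i + j))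
    (x y : A) (hx : x ≠ 0) (hy : y ≠ 0)
    (jx jy : I)
    (hjx : IsGreatest (((b.repr x).support : Finset I) : Set I) jx)
    (hjy : IsGreatest (((b.repr y).support : Finset I) : Set I) jy) :
    (∀ k : I, jx + jy < k → b.repr (x * y) k = 0) ∧
      (∃ u : Rˣ, b.repr (x * y) (jx + jy) = (u : R) * b.repr x jx * b.repr y jy) ∧
      b.repr (x * y) (jx + jy) ≠ 0 ∧ x * y ≠ 0 := by
  classical
  obtain ⟨hjxm, hjxu⟩ := hjx
  obtain ⟨hjym, hjyu⟩ := hjy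
  simp only [Finset.mem_coe] at hjxm hjym
  have hjxu' : ∀ i ∈ (b.repr x).support, i ≤ jx := fun i hi => hjxu (by exact hi)
  have hjyu' : ∀ j ∈ (b.repr y).support, j ≤ jy := fun j hj => hjyu (by exact hj)
  choose u hu using hb
  have hxs : x = ∑ i ∈ (b.repr x).support, b.repr x i • b i := by
    conv_lhs => rw [← b.linearCombination_repr x]
    rw [Finsupp.linearCombination_apply, Finsupp.sum]
  have hys : y = ∑ j ∈ (b.repr y).support, b.repr y j • b j := by
    conv_lhs => rw [← b.linearCombination_repr y]
    rw [Finsupp.linearCombination_apply, Finsupp.sum]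
  have hxy : x * y = ∑ i ∈ (b.repr x).support, ∑ j ∈ (b.repr y).support,
      ((u i j : R) * b.repr x i * b.repr y j) • b (i + j) := by
    conv_lhs => rw [hxs, hys]
    rw [Finset.sum_mul_sum]
    refine Finset.sum_congr rfl fun i _ => Finset.sum_congr rfl fun j _ => ?_
    rw [smul_mul_smul_comm, hu, Units.smul_def, smul_smul]
    congr 1
    ring
  have key : ∀ k : I, b.repr (x * y) k = ∑ i ∈ (b.repr x).support,
      ∑ j ∈ (b.repr y).support,
        if i + j = k then (u i j : R) * b.repr x i * b.repr y j else 0 := by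
    intro k
    rw [hxy, map_sum]
    rw [Finsupp.finset_sum_apply]
    refine Finset.sum_congr rfl fun i _ => ?_
    rw [map_sum, Finsupp.finset_sum_apply]
    refine Finset.sum_congr rfl fun j _ => ?_
    rw [map_smul, Finsupp.smul_apply, b.repr_self, Finsupp.single_apply]
    split <;> simp
  have h1 : ∀ k : I, jx + jy < k → b.repr (x * y) k = 0 := by
    intro k hk
    rw [key]
    refine Finset.sum_eq_zero fun i hi => Finset.sum_eq_zero fun j hj => ?_
    rw [if_neg]
    intro hij
    have : i + j ≤ jx + jy := add_le_add (hjxu' i hi) (hjyu' j hj)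
    exact absurd (hij ▸ this) (not_le.mpr hk)
  have h2 : b.repr (x * y) (jx + jy) =
      (u jx jy : R) * b.repr x jx * b.repr y jy := by
    rw [key]
    rw [Finset.sum_eq_single jx]
    · rw [Finset.sum_eq_single jy]
      · rw [if_pos rfl]
      · intro j hj hne
        rw [if_neg]
        intro hij
        have hlt : jx + j < jx + jy :=
          add_lt_add_right (lt_of_le_of_ne (hjyu' j hj) hne) jx
        exact absurd hij (ne_of_lt hlt)
      · intro h; exact absurd hjym h
    · intro i hi hne
      refine Finset.sum_eq_zero fun j hj => ?_
      rw [if_neg]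
      intro hij
      have hlt : i + j < jx + jy :=
        add_lt_add_of_lt_of_le (lt_of_le_of_ne (hjxu' i hi) hne) (hjyu' j hj)
      exact absurd hij (ne_of_lt hlt)
    · intro h; exact absurd hjxm h
  have hrx : b.repr x jx ≠ 0 := Finsupp.mem_support_iff.mp hjxm
  have hry : b.repr y jy ≠ 0 := Finsupp.mem_support_iff.mp hjym
  have hne : b.repr (x * y) (jx + jy) ≠ 0 := by
    rw [h2]
    exact mul_ne_zero (mul_ne_zero (Units.ne_zero _) hrx) hry
  refine ⟨h1, ⟨u jx jy, h2⟩, hne, fun h => hne (by simp [h])⟩
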